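/- In the mean-field setting, assume λ > 0 and p_out ≤ τ ≤ p_in. Then the symmetric matrix EL̃ = α^MF·I − EA_τ + λ·P_L is positive definite (in particular invertible), and the spectral norm of its inverse equals ‖EL̃⁻¹‖₂ = 1/(α^MF − t₂⁺), where t₂⁺ := (1/2)·( α^MF − λ + √( (λ + α^MF)² − 4·α^MF·λ·(θ + η) ) ); moreover α^MF − t₂⁺ = ((α^MF + λ)/2)·( 1 − √( 1 − 4·(θ+η)·λ·α^MF/(λ + α^MF)² ) ) > 0. -/

import Mathlib

open Finset Matrix

noncomputable section

/-- The spectral norm (operator 2-norm) of a real square matrix. -/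
def specNorm {n : ℕ} (M : Matrix (Fin n) (Fin n) ℝ) : ℝ :=
  ‖Matrix.toEuclideanCLM (𝕜 := ℝ) M‖

/-- The expected adjacency matrix `EA` of the SSBM. -/
def meanEA (n : ℕ) (pin pout : ℝ) (σ0 : Fin n → ℝ) : Matrix (Fin n) (Fin n) ℝ :=
  Matrix.of fun i j => if σ0 i = σ0 j then pin else pout

/-- The diagonal 0-1 matrix `P_L` with `(P_L)_{ii} = 1` iff `S_i ≠ 0`. -/
def labelProj (n : ℕ) (S : Fin n → ℝ) : Matrix (Fin n) (Fin n) ℝ :=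
  Matrix.diagonal fun i => if S i = 0 then 0 else 1

/-- The mean-field matrix `EL̃ = α^MF·I − EA_τ + λ·P_L`. -/
def meanLtilde (n : ℕ) (pin pout τ lam : ℝ) (σ0 S : Fin n → ℝ) :
    Matrix (Fin n) (Fin n) ℝ :=
  ((n : ℝ) * (pin - pout) / 2) • (1 : Matrix (Fin n) (Fin n) ℝ)
    - Matrix.of (fun i j => meanEA n pin pout σ0 i j - τ)
    + lam • labelProj n S

/-- `t₂⁺ = (1/2)(α^MF − λ + √((λ+α^MF)² − 4α^MF·λ(θ+η)))` with `θ = 2k/n`, `η = 2m/n`. -/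
def tTwoPlus (n k m : ℕ) (pin pout lam : ℝ) : ℝ :=
  (1 / 2) * ((n : ℝ) * (pin - pout) / 2 - lam
    + Real.sqrt ((lam + (n : ℝ) * (pin - pout) / 2) ^ 2
        - 4 * ((n : ℝ) * (pin - pout) / 2) * lam
          * (2 * (k : ℝ) / (n : ℝ) + 2 * (m : ℝ) / (n : ℝ))))


set_option maxHeartbeats 1000000

lemma aux_key (β u L lam μ N q p w : ℝ) (hβ : 0 < β) (hu : 0 < u)
    (hG : 0 < 2*β*L - μ) (hμ : 0 ≤ μ) (hlam : 0 < lam)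
    (hquad : μ^2 - (2*β*(L+u)+lam)*μ + 2*β*L*lam = 0)
    (hq : 0 ≤ q) (hp : p^2 ≤ L*q) (hw : w^2 ≤ u*(N-q)) :
    2*β*(p+w)^2 ≤ (2*β*(L+u) - μ)*N + lam*q := by
  have hA : 0 < 2*β*(L+u) - μ := by nlinarith
  have h1 : 4*β*u*(2*β*L - μ)*(p*w) ≤ 4*β^2*u^2*p^2 + (2*β*L - μ)^2*w^2 := by
    nlinarith [sq_nonneg (2*β*u*p - (2*β*L - μ)*w)]
  have h2 : 2*β*u*(2*β*(L+u)-μ)*p^2 ≤ 2*β*u*(2*β*(L+u)-μ)*(L*q) := by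
    apply mul_le_mul_of_nonneg_left hp; positivity
  have h3 : (2*β*L - μ)*(2*β*(L+u)-μ)*w^2 ≤ (2*β*L - μ)*(2*β*(L+u)-μ)*(u*(N-q)) := by
    apply mul_le_mul_of_nonneg_left hw; positivity
  have h5 : u*q*(μ^2 - (2*β*(L+u)+lam)*μ + 2*β*L*lam) = 0 := by rw [hquad]; ring
  have hkey : 0 ≤ u*(2*β*L - μ)*((2*β*(L+u) - μ)*N + lam*q - 2*β*(p+w)^2) := by
    nlinarith [h1, h2, h3, h5]
  have huG : 0 < u*(2*β*L - μ) := mul_pos hu hG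
  nlinarith [hkey, huG]


lemma aux_mu (β L u lam : ℝ) (hβ : 0 < β) (hL : 0 < L) (hu : 0 < u) (hlam : 0 < lam) :
    0 < (2*β*(L+u) + lam)^2 - 4*lam*(2*β*L) ∧
    (0 < (2*β*(L+u) + lam - Real.sqrt ((2*β*(L+u) + lam)^2 - 4*lam*(2*β*L)))/2) ∧
    ((2*β*(L+u) + lam - Real.sqrt ((2*β*(L+u) + lam)^2 - 4*lam*(2*β*L)))/2 < 2*β*L) ∧
    (((2*β*(L+u) + lam - Real.sqrt ((2*β*(L+u) + lam)^2 - 4*lam*(2*β*L)))/2)^2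
      - (2*β*(L+u)+lam)*((2*β*(L+u) + lam - Real.sqrt ((2*β*(L+u) + lam)^2 - 4*lam*(2*β*L)))/2)
      + 2*β*L*lam = 0) := by
  set A := 2*β*(L+u) with hA
  set D := (A + lam)^2 - 4*lam*(2*β*L) with hD
  have hApos : 0 < A := by positivity
  have hLA : 2*β*L < A := by nlinarith
  have hDpos : 0 < D := by nlinarith [sq_nonneg (A - lam)]
  have hs2 : (Real.sqrt D)^2 = D := Real.sq_sqrt hDpos.le
  have hsnn : 0 ≤ Real.sqrt D := Real.sqrt_nonneg D
  have hsT : Real.sqrt D < A + lam := by nlinarith [mul_pos hβ hL, mul_pos (mul_pos hβ hL) hlam]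
  refine ⟨hDpos, by linarith, ?_, by nlinarith⟩
  -- μ < 2βL  ⟺  A + lam - 2*(2βL) < sqrt D
  rcases lt_or_ge (A + lam - 2*(2*β*L)) 0 with h | h
  · linarith
  · have : A + lam - 2*(2*β*L) < Real.sqrt D := by
      rw [show A + lam - 2*(2*β*L) = Real.sqrt ((A + lam - 2*(2*β*L))^2) from (Real.sqrt_sq h).symm]
      apply Real.sqrt_lt_sqrt (sq_nonneg _)
      nlinarith [mul_pos hβ hL]
    linarith


lemma counting (n : ℕ) (hev : Even n) (k m : ℕ) (σ0 S : Fin n → ℝ)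
    (hσ : ∀ i, σ0 i = 1 ∨ σ0 i = -1)
    (hbal : (Finset.univ.filter (fun i => σ0 i = 1)).card = n / 2)
    (hSval : ∀ i, S i = σ0 i ∨ S i = -σ0 i ∨ S i = 0)
    (hk1 : (Finset.univ.filter (fun i => σ0 i = 1 ∧ S i = -1)).card = k)
    (hk2 : (Finset.univ.filter (fun i => σ0 i = -1 ∧ S i = 1)).card = k)
    (hm1 : (Finset.univ.filter (fun i => σ0 i = 1 ∧ S i = 1)).card = m)
    (hm2 : (Finset.univ.filter (fun i => σ0 i = -1 ∧ S i = -1)).card = m) :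
    (Finset.univ.filter (fun i => σ0 i = 1 ∧ S i ≠ 0)).card = k + m ∧
    (Finset.univ.filter (fun i => σ0 i = -1 ∧ S i ≠ 0)).card = k + m ∧
    (Finset.univ.filter (fun i => σ0 i = 1 ∧ S i = 0)).card + (k + m) = n / 2 ∧
    (Finset.univ.filter (fun i => σ0 i = -1 ∧ S i = 0)).card + (k + m) = n / 2 ∧
    (Finset.univ.filter (fun i => σ0 i = -1)).card = n / 2 := by
  classical
  have hC2 : (Finset.univ.filter (fun i => σ0 i = -1)).card = n / 2 := by
    have h := Finset.card_filter_add_card_filter_not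
      (s := (Finset.univ : Finset (Fin n))) (p := fun i => σ0 i = 1)
    have hfn : Finset.univ.filter (fun i => ¬ σ0 i = 1) = Finset.univ.filter (fun i => σ0 i = -1) := by
      apply Finset.filter_congr
      intro i _
      rcases hσ i with h1 | h1 <;> simp [h1] <;> norm_num
    rw [hbal, hfn] at h
    have hcard : (Finset.univ : Finset (Fin n)).card = n := by simp
    rw [hcard] at h
    obtain ⟨t, ht⟩ := hev
    omega
  have key1 : ∀ i, σ0 i = 1 → (S i ≠ 0 ↔ (S i = -1 ∨ S i = 1)) := by
    intro i h
    rcases hSval i with h' | h' | h' <;> simp [h', h] <;> norm_num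
  have key2 : ∀ i, σ0 i = -1 → (S i ≠ 0 ↔ (S i = 1 ∨ S i = -1)) := by
    intro i h
    rcases hSval i with h' | h' | h' <;> simp [h', h] <;> norm_num
  have e1 : Finset.univ.filter (fun i => σ0 i = 1 ∧ S i ≠ 0)
      = Finset.univ.filter (fun i => σ0 i = 1 ∧ S i = -1)
        ∪ Finset.univ.filter (fun i => σ0 i = 1 ∧ S i = 1) := by
    ext i
    simp only [Finset.mem_union, Finset.mem_filter, Finset.mem_univ, true_and]
    constructor
    · rintro ⟨h1, h2⟩
      rcases (key1 i h1).1 h2 with h | h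
      exacts [Or.inl ⟨h1, h⟩, Or.inr ⟨h1, h⟩]
    · rintro (⟨h1, h2⟩ | ⟨h1, h2⟩) <;> exact ⟨h1, by rw [h2]; norm_num⟩
  have e2 : Finset.univ.filter (fun i => σ0 i = -1 ∧ S i ≠ 0)
      = Finset.univ.filter (fun i => σ0 i = -1 ∧ S i = 1)
        ∪ Finset.univ.filter (fun i => σ0 i = -1 ∧ S i = -1) := by
    ext i
    simp only [Finset.mem_union, Finset.mem_filter, Finset.mem_univ, true_and]
    constructor
    · rintro ⟨h1, h2⟩
      rcases (key2 i h1).1 h2 with h | h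
      exacts [Or.inl ⟨h1, h⟩, Or.inr ⟨h1, h⟩]
    · rintro (⟨h1, h2⟩ | ⟨h1, h2⟩) <;> exact ⟨h1, by rw [h2]; norm_num⟩
  have d1 : Disjoint (Finset.univ.filter (fun i => σ0 i = 1 ∧ S i = -1))
      (Finset.univ.filter (fun i => σ0 i = 1 ∧ S i = 1)) := by
    rw [Finset.disjoint_left]
    intro i hi hj
    simp only [Finset.mem_filter] at hi hj
    have h1 := hi.2.2
    have h2 := hj.2.2
    rw [h1] at h2
    norm_num at h2
  have d2 : Disjoint (Finset.univ.filter (fun i => σ0 i = -1 ∧ S i = 1))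
      (Finset.univ.filter (fun i => σ0 i = -1 ∧ S i = -1)) := by
    rw [Finset.disjoint_left]
    intro i hi hj
    simp only [Finset.mem_filter] at hi hj
    have h1 := hi.2.2
    have h2 := hj.2.2
    rw [h1] at h2
    norm_num at h2
  have c1 : (Finset.univ.filter (fun i => σ0 i = 1 ∧ S i ≠ 0)).card = k + m := by
    rw [e1, Finset.card_union_of_disjoint d1, hk1, hm1]
  have c2 : (Finset.univ.filter (fun i => σ0 i = -1 ∧ S i ≠ 0)).card = k + m := by
    rw [e2, Finset.card_union_of_disjoint d2, hk2, hm2]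
  refine ⟨c1, c2, ?_, ?_, hC2⟩
  · have h := Finset.card_filter_add_card_filter_not
      (s := Finset.univ.filter (fun i => σ0 i = 1)) (p := fun i => S i = 0)
    rw [Finset.filter_filter, Finset.filter_filter, hbal] at h
    rw [show (Finset.univ.filter fun a => σ0 a = 1 ∧ ¬ S a = 0)
        = Finset.univ.filter (fun i => σ0 i = 1 ∧ S i ≠ 0) from rfl, c1] at h
    exact h
  · have h := Finset.card_filter_add_card_filter_not
      (s := Finset.univ.filter (fun i => σ0 i = -1)) (p := fun i => S i = 0)
    rw [Finset.filter_filter, Finset.filter_filter, hC2] at h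
    rw [show (Finset.univ.filter fun a => σ0 a = -1 ∧ ¬ S a = 0)
        = Finset.univ.filter (fun i => σ0 i = -1 ∧ S i ≠ 0) from rfl, c2] at h
    exact h


lemma quad_expand (n : ℕ) (pin pout τ lam : ℝ) (σ0 S : Fin n → ℝ)
    (hσ : ∀ i, σ0 i = 1 ∨ σ0 i = -1) (y : Fin n → ℝ) :
    y ⬝ᵥ (meanLtilde n pin pout τ lam σ0 S *ᵥ y)
      = ((n : ℝ) * (pin - pout) / 2) * (∑ i, y i^2)
        - (((pin + pout)/2 - τ) * (∑ i, y i)^2 + ((pin - pout)/2) * (∑ i, σ0 i * y i)^2)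
        + lam * ∑ i, (if S i = 0 then 0 else y i^2) := by
  set c := (pin + pout)/2 - τ
  set β := (pin - pout)/2
  have hB : ∀ i j, (meanEA n pin pout σ0 i j - τ) = c + β * (σ0 i * σ0 j) := by
    intro i j
    rcases hσ i with h1 | h1 <;> rcases hσ j with h2 | h2 <;>
      simp [meanEA, h1, h2, c, β] <;> norm_num <;> ring
  rw [meanLtilde, Matrix.add_mulVec, Matrix.sub_mulVec, Matrix.smul_mulVec,
    Matrix.one_mulVec, Matrix.smul_mulVec, dotProduct_add, dotProduct_sub, dotProduct_smul, dotProduct_smul, smul_eq_mul, smul_eq_mul]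
  have e1 : y ⬝ᵥ y = ∑ i, y i ^ 2 := by simp [dotProduct, sq]
  have e2 : y ⬝ᵥ ((Matrix.of (fun i j => meanEA n pin pout σ0 i j - τ)) *ᵥ y)
      = c * (∑ i, y i)^2 + β * (∑ i, σ0 i * y i)^2 := by
    have inner : ∀ i, ((Matrix.of (fun i j => meanEA n pin pout σ0 i j - τ)) *ᵥ y) i
        = c * (∑ j, y j) + β * σ0 i * (∑ j, σ0 j * y j) := by
      intro i
      simp only [Matrix.mulVec, dotProduct, Matrix.of_apply, hB]
      rw [Finset.mul_sum, Finset.mul_sum, ← Finset.sum_add_distrib]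
      exact Finset.sum_congr rfl fun j _ => by ring
    simp only [dotProduct, inner]
    rw [show ∀ r t : ℝ, ∑ i, y i * (c * r + β * σ0 i * t)
        = c * r * (∑ i, y i) + β * t * (∑ i, σ0 i * y i) from fun r t => by
      rw [Finset.mul_sum, Finset.mul_sum, ← Finset.sum_add_distrib]
      exact Finset.sum_congr rfl fun i _ => by ring]
    ring
  have e3 : y ⬝ᵥ ((labelProj n S) *ᵥ y) = ∑ i, (if S i = 0 then 0 else y i^2) := by
    simp only [labelProj, dotProduct, Matrix.mulVec_diagonal]
    exact Finset.sum_congr rfl fun i _ => by split <;> ring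
  rw [e1, e2, e3]


lemma quad_bound (n k m : ℕ) (pin pout τ lam μ β u : ℝ) (σ0 S : Fin n → ℝ)
    (hev : Even n)
    (hσ : ∀ i, σ0 i = 1 ∨ σ0 i = -1)
    (hbal : (Finset.univ.filter (fun i => σ0 i = 1)).card = n / 2)
    (hSval : ∀ i, S i = σ0 i ∨ S i = -σ0 i ∨ S i = 0)
    (hk1 : (Finset.univ.filter (fun i => σ0 i = 1 ∧ S i = -1)).card = k)
    (hk2 : (Finset.univ.filter (fun i => σ0 i = -1 ∧ S i = 1)).card = k)
    (hm1 : (Finset.univ.filter (fun i => σ0 i = 1 ∧ S i = 1)).card = m)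
    (hm2 : (Finset.univ.filter (fun i => σ0 i = -1 ∧ S i = -1)).card = m)
    (hβdef : β = (pin - pout)/2) (hβ : 0 < β)
    (hudef : u = (n:ℝ)/2 - ((k:ℝ)+m)) (hu : 0 < u)
    (hhalf : ((n/2 : ℕ):ℝ) = (n:ℝ)/2)
    (hτ : pout ≤ τ)
    (hG : 0 < 2*β*((k:ℝ)+m) - μ) (hμ0 : 0 ≤ μ) (hlam : 0 < lam)
    (hquad : μ^2 - (2*β*(((k:ℝ)+m) + u)+lam)*μ + 2*β*((k:ℝ)+m)*lam = 0)
    (x : Fin n → ℝ) :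
    μ * ∑ i, x i^2 ≤ x ⬝ᵥ (meanLtilde n pin pout τ lam σ0 S *ᵥ x) := by
  classical
  obtain ⟨cF1, cF2, cG1, cG2, cC2⟩ := counting n hev k m σ0 S hσ hbal hSval hk1 hk2 hm1 hm2
  set C1 := Finset.univ.filter (fun i => σ0 i = 1) with hC1
  set C2 := Finset.univ.filter (fun i => σ0 i = -1) with hC2
  set F1 := Finset.univ.filter (fun i => σ0 i = 1 ∧ S i ≠ 0) with hF1
  set G1 := Finset.univ.filter (fun i => σ0 i = 1 ∧ S i = 0) with hG1
  set F2 := Finset.univ.filter (fun i => σ0 i = -1 ∧ S i ≠ 0) with hF2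
  set G2 := Finset.univ.filter (fun i => σ0 i = -1 ∧ S i = 0) with hG2
  -- splitting of sums over univ into clusters
  have hsplit : ∀ f : Fin n → ℝ, ∑ i, f i = (∑ i ∈ C1, f i) + ∑ i ∈ C2, f i := by
    intro f
    rw [← Finset.sum_filter_add_sum_filter_not Finset.univ (fun i => σ0 i = 1) f]
    congr 1
    apply Finset.sum_congr _ (fun _ _ => rfl)
    apply Finset.filter_congr
    intro i _
    rcases hσ i with h | h <;> simp [h] <;> norm_num
  -- splitting cluster sums by labels
  have hsplitC1 : ∀ f : Fin n → ℝ, ∑ i ∈ C1, f i = (∑ i ∈ G1, f i) + ∑ i ∈ F1, f i := by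
    intro f
    rw [← Finset.sum_filter_add_sum_filter_not C1 (fun i => S i = 0) f, hC1,
      Finset.filter_filter, Finset.filter_filter]
  have hsplitC2 : ∀ f : Fin n → ℝ, ∑ i ∈ C2, f i = (∑ i ∈ G2, f i) + ∑ i ∈ F2, f i := by
    intro f
    rw [← Finset.sum_filter_add_sum_filter_not C2 (fun i => S i = 0) f, hC2,
      Finset.filter_filter, Finset.filter_filter]
  -- real cardinalities
  have hcF1 : ((F1.card : ℝ)) = (k:ℝ) + m := by rw [cF1]; push_cast; ring
  have hcF2 : ((F2.card : ℝ)) = (k:ℝ) + m := by rw [cF2]; push_cast; ring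
  have hcG1 : ((G1.card : ℝ)) = u := by
    have : ((G1.card + (k + m) : ℕ) : ℝ) = ((n/2 : ℕ) : ℝ) := by rw [cG1]
    push_cast at this
    rw [hhalf] at this
    rw [hudef]; linarith
  have hcG2 : ((G2.card : ℝ)) = u := by
    have : ((G2.card + (k + m) : ℕ) : ℝ) = ((n/2 : ℕ) : ℝ) := by rw [cG2]
    push_cast at this
    rw [hhalf] at this
    rw [hudef]; linarith
  -- abbreviations for the relevant sums
  have hq1 : (0:ℝ) ≤ ∑ i ∈ F1, x i^2 := Finset.sum_nonneg fun i _ => sq_nonneg _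
  have hq2 : (0:ℝ) ≤ ∑ i ∈ F2, x i^2 := Finset.sum_nonneg fun i _ => sq_nonneg _
  -- Cauchy–Schwarz
  have hp1 : (∑ i ∈ F1, x i)^2 ≤ ((k:ℝ)+m) * ∑ i ∈ F1, x i^2 := by
    have := sq_sum_le_card_mul_sum_sq (s := F1) (f := x)
    rwa [hcF1] at this
  have hp2 : (∑ i ∈ F2, x i)^2 ≤ ((k:ℝ)+m) * ∑ i ∈ F2, x i^2 := by
    have := sq_sum_le_card_mul_sum_sq (s := F2) (f := x)
    rwa [hcF2] at this
  have hw1 : (∑ i ∈ G1, x i)^2 ≤ u * ((∑ i ∈ C1, x i^2) - ∑ i ∈ F1, x i^2) := by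
    have := sq_sum_le_card_mul_sum_sq (s := G1) (f := x)
    rw [hcG1] at this
    have e := hsplitC1 (fun i => x i^2)
    rw [e]
    linarith [this]
  have hw2 : (∑ i ∈ G2, x i)^2 ≤ u * ((∑ i ∈ C2, x i^2) - ∑ i ∈ F2, x i^2) := by
    have := sq_sum_le_card_mul_sum_sq (s := G2) (f := x)
    rw [hcG2] at this
    have e := hsplitC2 (fun i => x i^2)
    rw [e]
    linarith [this]
  -- key per-cluster bounds
  have key1 := aux_key β u ((k:ℝ)+m) lam μ (∑ i ∈ C1, x i^2) (∑ i ∈ F1, x i^2)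
    (∑ i ∈ F1, x i) (∑ i ∈ G1, x i) hβ hu hG hμ0 hlam hquad hq1 hp1 hw1
  have key2 := aux_key β u ((k:ℝ)+m) lam μ (∑ i ∈ C2, x i^2) (∑ i ∈ F2, x i^2)
    (∑ i ∈ F2, x i) (∑ i ∈ G2, x i) hβ hu hG hμ0 hlam hquad hq2 hp2 hw2
  -- expand the quadratic form
  rw [quad_expand n pin pout τ lam σ0 S hσ x]
  -- rewrite all univ sums in cluster terms
  have hr : ∑ i, x i = (∑ i ∈ C1, x i) + ∑ i ∈ C2, x i := hsplit x
  have ht : ∑ i, σ0 i * x i = (∑ i ∈ C1, x i) - ∑ i ∈ C2, x i := by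
    rw [hsplit (fun i => σ0 i * x i)]
    have e1 : ∑ i ∈ C1, σ0 i * x i = ∑ i ∈ C1, x i := by
      apply Finset.sum_congr rfl
      intro i hi
      rw [(Finset.mem_filter.mp hi).2, one_mul]
    have e2 : ∑ i ∈ C2, σ0 i * x i = -∑ i ∈ C2, x i := by
      rw [← Finset.sum_neg_distrib]
      apply Finset.sum_congr rfl
      intro i hi
      rw [(Finset.mem_filter.mp hi).2]; ring
    rw [e1, e2]; ring
  have hQ : ∑ i, (if S i = 0 then 0 else x i^2) = (∑ i ∈ F1, x i^2) + ∑ i ∈ F2, x i^2 := by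
    rw [hsplit (fun i => if S i = 0 then 0 else x i^2)]
    congr 1
    · rw [hsplitC1 (fun i => if S i = 0 then 0 else x i^2)]
      have e0 : ∑ i ∈ G1, (if S i = 0 then 0 else x i^2) = 0 := by
        apply Finset.sum_eq_zero
        intro i hi
        rw [if_pos (Finset.mem_filter.mp hi).2.2]
      have e1 : ∑ i ∈ F1, (if S i = 0 then 0 else x i^2) = ∑ i ∈ F1, x i^2 := by
        apply Finset.sum_congr rfl
        intro i hi
        rw [if_neg (Finset.mem_filter.mp hi).2.2]
      rw [e0, e1, zero_add]
    · rw [hsplitC2 (fun i => if S i = 0 then 0 else x i^2)]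
      have e0 : ∑ i ∈ G2, (if S i = 0 then 0 else x i^2) = 0 := by
        apply Finset.sum_eq_zero
        intro i hi
        rw [if_pos (Finset.mem_filter.mp hi).2.2]
      have e1 : ∑ i ∈ F2, (if S i = 0 then 0 else x i^2) = ∑ i ∈ F2, x i^2 := by
        apply Finset.sum_congr rfl
        intro i hi
        rw [if_neg (Finset.mem_filter.mp hi).2.2]
      rw [e0, e1, zero_add]
  have hsum : ∑ i, x i^2 = (∑ i ∈ C1, x i^2) + ∑ i ∈ C2, x i^2 := hsplit (fun i => x i^2)
  rw [hr, ht, hQ, hsum]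
  -- cluster sums relations
  have hs1 : (∑ i ∈ C1, x i) = (∑ i ∈ G1, x i) + ∑ i ∈ F1, x i := hsplitC1 x
  have hs2 : (∑ i ∈ C2, x i) = (∑ i ∈ G2, x i) + ∑ i ∈ F2, x i := hsplitC2 x
  have hA : (n:ℝ) * (pin - pout) / 2 = 2*β*(((k:ℝ)+m) + u) := by
    rw [hβdef, hudef]; ring
  have hc : (pin + pout)/2 - τ ≤ β := by rw [hβdef]; linarith
  have key1' : 2*β*(∑ i ∈ C1, x i)^2 ≤ (2*β*(((k:ℝ)+m)+u) - μ)*(∑ i ∈ C1, x i^2)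
      + lam*(∑ i ∈ F1, x i^2) := by
    rw [hs1]
    linarith [key1]
  have key2' : 2*β*(∑ i ∈ C2, x i)^2 ≤ (2*β*(((k:ℝ)+m)+u) - μ)*(∑ i ∈ C2, x i^2)
      + lam*(∑ i ∈ F2, x i^2) := by
    rw [hs2]
    linarith [key2]
  rw [hA, ← hβdef]
  have hcoef : 0 ≤ (β - ((pin + pout)/2 - τ)) * ((∑ i ∈ C1, x i) + ∑ i ∈ C2, x i)^2 :=
    mul_nonneg (sub_nonneg.mpr hc) (sq_nonneg _)
  linarith [key1', key2', hcoef]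



lemma eigenvec (n k m : ℕ) (pin pout τ lam μ β u : ℝ) (σ0 S : Fin n → ℝ)
    (hev : Even n)
    (hσ : ∀ i, σ0 i = 1 ∨ σ0 i = -1)
    (hbal : (Finset.univ.filter (fun i => σ0 i = 1)).card = n / 2)
    (hSval : ∀ i, S i = σ0 i ∨ S i = -σ0 i ∨ S i = 0)
    (hk1 : (Finset.univ.filter (fun i => σ0 i = 1 ∧ S i = -1)).card = k)
    (hk2 : (Finset.univ.filter (fun i => σ0 i = -1 ∧ S i = 1)).card = k)
    (hm1 : (Finset.univ.filter (fun i => σ0 i = 1 ∧ S i = 1)).card = m)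
    (hm2 : (Finset.univ.filter (fun i => σ0 i = -1 ∧ S i = -1)).card = m)
    (hβdef : β = (pin - pout)/2)
    (hudef : u = (n:ℝ)/2 - ((k:ℝ)+m))
    (hhalf : ((n/2 : ℕ):ℝ) = (n:ℝ)/2)
    (hquad : μ^2 - (2*β*(((k:ℝ)+m) + u)+lam)*μ + 2*β*((k:ℝ)+m)*lam = 0) :
    meanLtilde n pin pout τ lam σ0 S *ᵥ
        (fun i => σ0 i * (if S i = 0 then 2*β*u + lam - μ else 2*β*u))
      = μ • (fun i => σ0 i * (if S i = 0 then 2*β*u + lam - μ else 2*β*u)) := by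
  classical
  obtain ⟨cF1, cF2, cG1, cG2, cC2⟩ := counting n hev k m σ0 S hσ hbal hSval hk1 hk2 hm1 hm2
  set a := 2*β*u with ha
  set b := 2*β*u + lam - μ with hb
  set v : Fin n → ℝ := fun i => σ0 i * (if S i = 0 then b else a) with hv
  set c := (pin + pout)/2 - τ with hcdef
  have hB : ∀ i j, (meanEA n pin pout σ0 i j - τ) = c + β * (σ0 i * σ0 j) := by
    intro i j
    rcases hσ i with h1 | h1 <;> rcases hσ j with h2 | h2 <;>
      simp [meanEA, h1, h2, c, hβdef] <;> norm_num <;> ring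
  set C1 := Finset.univ.filter (fun i => σ0 i = 1) with hC1
  set C2 := Finset.univ.filter (fun i => σ0 i = -1) with hC2
  set F1 := Finset.univ.filter (fun i => σ0 i = 1 ∧ S i ≠ 0) with hF1
  set G1 := Finset.univ.filter (fun i => σ0 i = 1 ∧ S i = 0) with hG1
  set F2 := Finset.univ.filter (fun i => σ0 i = -1 ∧ S i ≠ 0) with hF2
  set G2 := Finset.univ.filter (fun i => σ0 i = -1 ∧ S i = 0) with hG2
  have hsplit : ∀ f : Fin n → ℝ, ∑ i, f i = (∑ i ∈ C1, f i) + ∑ i ∈ C2, f i := by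
    intro f
    rw [← Finset.sum_filter_add_sum_filter_not Finset.univ (fun i => σ0 i = 1) f]
    congr 1
    apply Finset.sum_congr _ (fun _ _ => rfl)
    apply Finset.filter_congr
    intro i _
    rcases hσ i with h | h <;> simp [h] <;> norm_num
  have hsplitC1 : ∀ f : Fin n → ℝ, ∑ i ∈ C1, f i = (∑ i ∈ G1, f i) + ∑ i ∈ F1, f i := by
    intro f
    rw [← Finset.sum_filter_add_sum_filter_not C1 (fun i => S i = 0) f, hC1,
      Finset.filter_filter, Finset.filter_filter]
  have hsplitC2 : ∀ f : Fin n → ℝ, ∑ i ∈ C2, f i = (∑ i ∈ G2, f i) + ∑ i ∈ F2, f i := by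
    intro f
    rw [← Finset.sum_filter_add_sum_filter_not C2 (fun i => S i = 0) f, hC2,
      Finset.filter_filter, Finset.filter_filter]
  have hcF1 : ((F1.card : ℝ)) = (k:ℝ) + m := by rw [cF1]; push_cast; ring
  have hcF2 : ((F2.card : ℝ)) = (k:ℝ) + m := by rw [cF2]; push_cast; ring
  have hcG1 : ((G1.card : ℝ)) = u := by
    have : ((G1.card + (k + m) : ℕ) : ℝ) = ((n/2 : ℕ) : ℝ) := by rw [cG1]
    push_cast at this
    rw [hhalf] at this
    rw [hudef]; linarith
  have hcG2 : ((G2.card : ℝ)) = u := by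
    have : ((G2.card + (k + m) : ℕ) : ℝ) = ((n/2 : ℕ) : ℝ) := by rw [cG2]
    push_cast at this
    rw [hhalf] at this
    rw [hudef]; linarith
  -- value sums of v over label classes
  have hvG1 : ∀ i ∈ G1, v i = b := by
    intro i hi
    obtain ⟨-, h1, h2⟩ := Finset.mem_filter.mp hi
    simp [hv, h1, h2]
  have hvF1 : ∀ i ∈ F1, v i = a := by
    intro i hi
    obtain ⟨-, h1, h2⟩ := Finset.mem_filter.mp hi
    simp [hv, h1, if_neg h2]
  have hvG2 : ∀ i ∈ G2, v i = -b := by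
    intro i hi
    obtain ⟨-, h1, h2⟩ := Finset.mem_filter.mp hi
    simp [hv, h1, h2]
  have hvF2 : ∀ i ∈ F2, v i = -a := by
    intro i hi
    obtain ⟨-, h1, h2⟩ := Finset.mem_filter.mp hi
    simp [hv, h1, if_neg h2]
  have hSv : ∑ j, v j = 0 := by
    rw [hsplit v, hsplitC1 v, hsplitC2 v,
      Finset.sum_congr rfl hvG1, Finset.sum_congr rfl hvF1,
      Finset.sum_congr rfl hvG2, Finset.sum_congr rfl hvF2,
      Finset.sum_const, Finset.sum_const, Finset.sum_const, Finset.sum_const,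
      nsmul_eq_mul, nsmul_eq_mul, nsmul_eq_mul, nsmul_eq_mul,
      hcG1, hcG2, hcF1, hcF2]
    ring
  have hSt : ∑ j, σ0 j * v j = 2*(((k:ℝ)+m)*a + u*b) := by
    have hw : ∀ j, σ0 j * v j = (if S j = 0 then b else a) := by
      intro j
      rcases hσ j with h | h <;> simp [hv, h] <;> ring
    rw [Finset.sum_congr rfl (fun j _ => hw j),
      hsplit (fun j => if S j = 0 then b else a),
      hsplitC1 (fun j => if S j = 0 then b else a),
      hsplitC2 (fun j => if S j = 0 then b else a)]
    have eG1 : ∑ j ∈ G1, (if S j = 0 then b else a) = (G1.card : ℝ) * b := by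
      rw [Finset.sum_congr rfl (fun j hj => if_pos (Finset.mem_filter.mp hj).2.2),
        Finset.sum_const, nsmul_eq_mul]
    have eG2 : ∑ j ∈ G2, (if S j = 0 then b else a) = (G2.card : ℝ) * b := by
      rw [Finset.sum_congr rfl (fun j hj => if_pos (Finset.mem_filter.mp hj).2.2),
        Finset.sum_const, nsmul_eq_mul]
    have eF1 : ∑ j ∈ F1, (if S j = 0 then b else a) = (F1.card : ℝ) * a := by
      rw [Finset.sum_congr rfl (fun j hj => if_neg (Finset.mem_filter.mp hj).2.2),
        Finset.sum_const, nsmul_eq_mul]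
    have eF2 : ∑ j ∈ F2, (if S j = 0 then b else a) = (F2.card : ℝ) * a := by
      rw [Finset.sum_congr rfl (fun j hj => if_neg (Finset.mem_filter.mp hj).2.2),
        Finset.sum_const, nsmul_eq_mul]
    rw [eG1, eG2, eF1, eF2, hcG1, hcG2, hcF1, hcF2]
    ring
  -- now compute the matrix-vector product componentwise
  funext i
  have hmv : (meanLtilde n pin pout τ lam σ0 S *ᵥ v) i
      = ((n:ℝ) * (pin - pout) / 2) * v i
        - (c * (∑ j, v j) + β * σ0 i * (∑ j, σ0 j * v j))
        + lam * ((if S i = 0 then 0 else 1) * v i) := by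
    have h2 : ((Matrix.of fun i j => meanEA n pin pout σ0 i j - τ) *ᵥ v) i
        = c * (∑ j, v j) + β * σ0 i * (∑ j, σ0 j * v j) := by
      simp only [Matrix.mulVec, dotProduct, Matrix.of_apply, hB]
      rw [Finset.mul_sum, Finset.mul_sum, ← Finset.sum_add_distrib]
      apply Finset.sum_congr rfl
      intro j _
      ring
    have h3 : ((labelProj n S) *ᵥ v) i = (if S i = 0 then 0 else 1) * v i := by
      rw [labelProj, Matrix.mulVec_diagonal]
    rw [meanLtilde, Matrix.add_mulVec, Matrix.sub_mulVec, Matrix.smul_mulVec,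
      Matrix.one_mulVec, Matrix.smul_mulVec]
    simp only [Pi.add_apply, Pi.sub_apply, Pi.smul_apply, smul_eq_mul]
    rw [h2, h3]
  rw [hmv, hSv, hSt]
  have hA : (n:ℝ) * (pin - pout) / 2 = 2*β*(((k:ℝ)+m) + u) := by
    rw [hβdef, hudef]; ring
  rw [hA]
  simp only [Pi.smul_apply, smul_eq_mul, hv]
  rcases eq_or_ne (S i) 0 with h | h
  · rw [if_pos h, if_pos h]
    linear_combination (σ0 i) * hquad
  · rw [if_neg h, if_neg h]
    ring


lemma norm_inv_eq (n : ℕ) (M : Matrix (Fin n) (Fin n) ℝ) (μ : ℝ) (hμ : 0 < μ)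
    (hquad : ∀ x : Fin n → ℝ, μ * ∑ i, x i ^ 2 ≤ x ⬝ᵥ (M *ᵥ x))
    (v : Fin n → ℝ) (hv : v ≠ 0) (heig : M *ᵥ v = μ • v)
    (hdet : IsUnit M.det) :
    ‖Matrix.toEuclideanCLM (𝕜 := ℝ) M⁻¹‖ = 1 / μ := by
  classical
  set T := Matrix.toEuclideanCLM (𝕜 := ℝ) M⁻¹ with hT
  have hMul : M * M⁻¹ = 1 := Matrix.mul_nonsing_inv M hdet
  have hMul' : M⁻¹ * M = 1 := Matrix.nonsing_inv_mul M hdet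
  -- inner-product form of the quadratic bound
  have hinner : ∀ y : EuclideanSpace ℝ (Fin n),
      μ * (inner ℝ y y : ℝ) ≤ (inner ℝ y (Matrix.toEuclideanCLM (𝕜 := ℝ) M y) : ℝ) := by
    intro y
    have h1 : (inner ℝ y y : ℝ) = ∑ i, (y i)^2 := by
      rw [real_inner_self_eq_norm_sq, EuclideanSpace.norm_sq_eq]; simp [Real.norm_eq_abs, sq_abs]
    have h2 : (inner ℝ y (Matrix.toEuclideanCLM (𝕜 := ℝ) M y) : ℝ)
        = (fun i => y i) ⬝ᵥ (M *ᵥ (fun i => y i)) := by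
      simp [PiLp.inner_apply, RCLike.inner_apply, conj_trivial, dotProduct,
        Matrix.ofLp_toEuclideanCLM, mulVec, dotProduct]
      exact Finset.sum_congr rfl fun i _ => mul_comm _ _
    rw [h1, h2]
    exact hquad (fun i => y i)
  -- upper bound
  have hub : ∀ x : EuclideanSpace ℝ (Fin n), ‖T x‖ ≤ (1/μ) * ‖x‖ := by
    intro x
    set y := T x with hy
    have hyx : Matrix.toEuclideanCLM (𝕜 := ℝ) M y = x := by
      rw [hy, hT]
      calc Matrix.toEuclideanCLM (𝕜 := ℝ) M (Matrix.toEuclideanCLM (𝕜 := ℝ) M⁻¹ x)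
          = (Matrix.toEuclideanCLM (𝕜 := ℝ) M * Matrix.toEuclideanCLM (𝕜 := ℝ) M⁻¹) x := rfl
        _ = (Matrix.toEuclideanCLM (𝕜 := ℝ) (M * M⁻¹)) x := by rw [_root_.map_mul]
        _ = (Matrix.toEuclideanCLM (𝕜 := ℝ) (1 : Matrix (Fin n) (Fin n) ℝ)) x := by rw [hMul]
        _ = x := by rw [_root_.map_one]; rfl
    have h1 : μ * (inner ℝ y y : ℝ) ≤ (inner ℝ y x : ℝ) := by
      have := hinner y
      rwa [hyx] at this
    have h2 : (inner ℝ y x : ℝ) ≤ ‖y‖ * ‖x‖ := real_inner_le_norm y x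
    have h3 : (inner ℝ y y : ℝ) = ‖y‖^2 := real_inner_self_eq_norm_sq y
    rcases eq_or_lt_of_le (norm_nonneg y) with h0 | h0
    · rw [← h0]
      positivity
    · have h4 : μ * ‖y‖ ≤ ‖x‖ := by
        rw [h3] at h1
        nlinarith
      rw [div_mul_eq_mul_div, one_mul, le_div_iff₀ hμ]
      linarith [h4]
  -- lower bound via the eigenvector
  set v' : EuclideanSpace ℝ (Fin n) := (WithLp.equiv 2 (Fin n → ℝ)).symm v with hv'
  have hv'ne : v' ≠ 0 := by
    intro h
    apply hv
    have := congrArg (WithLp.equiv 2 (Fin n → ℝ)) h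
    simpa [hv'] using this
  have hMv' : Matrix.toEuclideanCLM (𝕜 := ℝ) M v' = μ • v' := by
    rw [hv', WithLp.equiv_symm_apply, Matrix.toEuclideanCLM_toLp, heig]
    simp
  have hTv' : T v' = μ⁻¹ • v' := by
    have e1 : T (Matrix.toEuclideanCLM (𝕜 := ℝ) M v') = v' := by
      rw [hT]
      calc Matrix.toEuclideanCLM (𝕜 := ℝ) M⁻¹ (Matrix.toEuclideanCLM (𝕜 := ℝ) M v')
          = (Matrix.toEuclideanCLM (𝕜 := ℝ) M⁻¹ * Matrix.toEuclideanCLM (𝕜 := ℝ) M) v' := rfl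
        _ = (Matrix.toEuclideanCLM (𝕜 := ℝ) (M⁻¹ * M)) v' := by rw [_root_.map_mul]
        _ = (Matrix.toEuclideanCLM (𝕜 := ℝ) (1 : Matrix (Fin n) (Fin n) ℝ)) v' := by rw [hMul']
        _ = v' := by rw [_root_.map_one]; rfl
    rw [hMv', _root_.map_smul] at e1
    have : μ⁻¹ • (μ • T v') = μ⁻¹ • v' := by rw [e1]
    rwa [smul_smul, inv_mul_cancel₀ hμ.ne', one_smul] at this
  have hnormTv' : ‖T v'‖ = μ⁻¹ * ‖v'‖ := by
    rw [hTv', norm_smul, Real.norm_eq_abs, abs_of_pos (inv_pos.mpr hμ)]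
  have hlb : 1/μ ≤ ‖T‖ := by
    have h5 : ‖T v'‖ ≤ ‖T‖ * ‖v'‖ := T.le_opNorm v'
    rw [hnormTv'] at h5
    have h6 : 0 < ‖v'‖ := norm_pos_iff.mpr hv'ne
    rw [one_div]
    nlinarith
  exact le_antisymm (T.opNorm_le_bound (by positivity) hub) hlb


lemma herm (n : ℕ) (pin pout τ lam : ℝ) (σ0 S : Fin n → ℝ) :
    (meanLtilde n pin pout τ lam σ0 S).IsHermitian := by
  show (meanLtilde n pin pout τ lam σ0 S)ᴴ = meanLtilde n pin pout τ lam σ0 S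
  ext i j
  simp only [Matrix.conjTranspose_apply, meanLtilde, Matrix.add_apply, Matrix.sub_apply,
    Matrix.smul_apply, Matrix.one_apply, Matrix.of_apply, labelProj, Matrix.diagonal_apply,
    smul_eq_mul, meanEA, star_trivial]
  rcases eq_or_ne i j with h | h
  · subst h; rfl
  · simp only [if_neg h, if_neg (Ne.symm h)]
    by_cases hs : σ0 i = σ0 j
    · rw [if_pos hs, if_pos hs.symm]
    · rw [if_neg hs, if_neg (fun hh => hs hh.symm)]

/-- **Spectral norm of the inverse mean-field matrix (Corollary 3 of the appendix).**
In the mean-field setting with `λ > 0` and `p_out ≤ τ ≤ p_in`, the symmetric matrix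
`EL̃ = α^MF·I − EA_τ + λ·P_L` is positive definite (in particular invertible), and
`‖EL̃⁻¹‖₂ = 1/(α^MF − t₂⁺)`; moreover
`α^MF − t₂⁺ = ((α^MF+λ)/2)(1 − √(1 − 4(θ+η)λα^MF/(λ+α^MF)²)) > 0`. -/
theorem meanField_inverse_norm
    (n : ℕ) (hn : 0 < n) (hev : Even n) (pin pout : ℝ)
    (hpout : 0 < pout) (hp : pout < pin) (hpin : pin < 1)
    (k m : ℕ) (hkm1 : 1 ≤ k + m) (hkm2 : k + m ≤ n / 2 - 1)
    (σ0 S : Fin n → ℝ)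
    (hσ : ∀ i, σ0 i = 1 ∨ σ0 i = -1)
    (hbal : (Finset.univ.filter (fun i => σ0 i = 1)).card = n / 2)
    (hSval : ∀ i, S i = σ0 i ∨ S i = -σ0 i ∨ S i = 0)
    (hk1 : (Finset.univ.filter (fun i => σ0 i = 1 ∧ S i = -1)).card = k)
    (hk2 : (Finset.univ.filter (fun i => σ0 i = -1 ∧ S i = 1)).card = k)
    (hm1 : (Finset.univ.filter (fun i => σ0 i = 1 ∧ S i = 1)).card = m)
    (hm2 : (Finset.univ.filter (fun i => σ0 i = -1 ∧ S i = -1)).card = m)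
    (τ lam : ℝ) (hlam : 0 < lam) (hτ1 : pout ≤ τ) (hτ2 : τ ≤ pin) :
    (meanLtilde n pin pout τ lam σ0 S).PosDef
    ∧ IsUnit (meanLtilde n pin pout τ lam σ0 S).det
    ∧ specNorm (meanLtilde n pin pout τ lam σ0 S)⁻¹
        = 1 / ((n : ℝ) * (pin - pout) / 2 - tTwoPlus n k m pin pout lam)
    ∧ (n : ℝ) * (pin - pout) / 2 - tTwoPlus n k m pin pout lam
        = (((n : ℝ) * (pin - pout) / 2 + lam) / 2)
          * (1 - Real.sqrt (1 -
              4 * (2 * (k : ℝ) / (n : ℝ) + 2 * (m : ℝ) / (n : ℝ))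
                * lam * ((n : ℝ) * (pin - pout) / 2)
                / (lam + (n : ℝ) * (pin - pout) / 2) ^ 2))
    ∧ 0 < (n : ℝ) * (pin - pout) / 2 - tTwoPlus n k m pin pout lam := by
  classical
  have hn0 : (0:ℝ) < n := by exact_mod_cast hn
  obtain ⟨t, ht⟩ := hev
  have ht2 : n / 2 = t := by omega
  have hhalf : ((n/2 : ℕ):ℝ) = (n:ℝ)/2 := by
    rw [ht2, ht]; push_cast; ring
  set β := (pin - pout)/2 with hβdef
  have hβ : 0 < β := by rw [hβdef]; linarith
  set L : ℝ := (k:ℝ) + m with hLdef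
  set u : ℝ := (n:ℝ)/2 - L with hudef
  have hL : 0 < L := by
    have h1 : (1:ℝ) ≤ (k:ℝ) + m := by exact_mod_cast hkm1
    rw [hLdef]; linarith
  have hu : 0 < u := by
    have hnat : k + m + 1 ≤ n / 2 := by omega
    have h2 : ((k + m + 1 : ℕ):ℝ) ≤ ((n/2:ℕ):ℝ) := by exact_mod_cast hnat
    push_cast at h2
    rw [hhalf] at h2
    rw [hudef, hLdef]; linarith
  have hA : (n:ℝ) * (pin - pout) / 2 = 2*β*(L + u) := by rw [hβdef, hudef]; ring
  obtain ⟨hD0, hμ0, hμlt, hquad⟩ := aux_mu β L u lam hβ hL hu hlam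
  set s := Real.sqrt ((2*β*(L+u) + lam)^2 - 4*lam*(2*β*L)) with hs
  set μ := (2*β*(L+u) + lam - s)/2 with hμdef
  have hρ : (n:ℝ) * (pin - pout) / 2 * (2*(k:ℝ)/(n:ℝ) + 2*(m:ℝ)/(n:ℝ)) = 2*β*L := by
    rw [hβdef, hLdef]; field_simp
  have hDe : (lam + (n:ℝ)*(pin-pout)/2)^2
        - 4*((n:ℝ)*(pin-pout)/2)*lam*(2*(k:ℝ)/(n:ℝ) + 2*(m:ℝ)/(n:ℝ))
      = (2*β*(L+u) + lam)^2 - 4*lam*(2*β*L) := by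
    linear_combination ((n:ℝ)*(pin-pout)/2 + 2*β*(L+u) + 2*lam) * hA + (-(4:ℝ)*lam) * hρ
  have hμeq : (n:ℝ)*(pin-pout)/2 - tTwoPlus n k m pin pout lam = μ := by
    have hsq : Real.sqrt ((lam + (n:ℝ)*(pin-pout)/2)^2
        - 4*((n:ℝ)*(pin-pout)/2)*lam*(2*(k:ℝ)/(n:ℝ) + 2*(m:ℝ)/(n:ℝ))) = s := by
      rw [hs]; exact congrArg Real.sqrt hDe
    rw [tTwoPlus, hsq, hμdef, hA]; ring
  set M := meanLtilde n pin pout τ lam σ0 S with hM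
  have hGx : 0 < 2*β*((k:ℝ)+m) - μ := by rw [← hLdef]; linarith
  have hquadx : μ^2 - (2*β*(((k:ℝ)+m) + u)+lam)*μ + 2*β*((k:ℝ)+m)*lam = 0 := by
    rw [← hLdef]; exact hquad
  have hudefx : u = (n:ℝ)/2 - ((k:ℝ)+m) := by rw [hudef, hLdef]
  have hquadB : ∀ x : Fin n → ℝ, μ * ∑ i, x i^2 ≤ x ⬝ᵥ (M *ᵥ x) :=
    fun x => quad_bound n k m pin pout τ lam μ β u σ0 S ⟨t, ht⟩ hσ hbal hSval hk1 hk2 hm1 hm2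
      hβdef hβ hudefx hu hhalf hτ1 hGx hμ0.le hlam hquadx x
  have hPD : M.PosDef := by
    refine Matrix.PosDef.of_dotProduct_mulVec_pos (herm n pin pout τ lam σ0 S) ?_
    intro x hx
    have hb := hquadB x
    have hpos : 0 < ∑ i, x i^2 := by
      obtain ⟨i, hi⟩ := Function.ne_iff.mp hx
      exact Finset.sum_pos' (fun j _ => sq_nonneg _) ⟨i, Finset.mem_univ i, by rw [← sq_abs]; exact pow_pos (abs_pos.mpr hi) 2⟩
    have hstar : (star x) = x := by funext i; exact star_trivial _
    rw [hstar]
    calc (0:ℝ) < μ * ∑ i, x i^2 := by positivity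
    _ ≤ _ := hb
  have hdet : IsUnit M.det := isUnit_iff_ne_zero.mpr hPD.det_pos.ne'
  set v : Fin n → ℝ := fun i => σ0 i * (if S i = 0 then 2*β*u + lam - μ else 2*β*u) with hvdef
  have heig : M *ᵥ v = μ • v :=
    eigenvec n k m pin pout τ lam μ β u σ0 S ⟨t, ht⟩ hσ hbal hSval hk1 hk2 hm1 hm2
      hβdef hudefx hhalf hquadx
  have hvne : v ≠ 0 := by
    obtain ⟨cF1, -, -, -, -⟩ := counting n ⟨t, ht⟩ k m σ0 S hσ hbal hSval hk1 hk2 hm1 hm2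
    have hne : (Finset.univ.filter (fun i => σ0 i = 1 ∧ S i ≠ 0)).Nonempty := by
      rw [← Finset.card_pos, cF1]; omega
    obtain ⟨i, hi⟩ := hne
    obtain ⟨-, h1, h2⟩ := Finset.mem_filter.mp hi
    intro h0
    have hvi := congrFun h0 i
    simp only [hvdef, h1, if_neg h2, one_mul, Pi.zero_apply] at hvi
    have : 0 < 2*β*u := mul_pos (mul_pos two_pos hβ) hu
    linarith [hvi.symm.le, this]
  have hnorm := norm_inv_eq n M μ hμ0 hquadB v hvne heig hdet
  refine ⟨hPD, hdet, ?_, ?_, ?_⟩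
  · show ‖Matrix.toEuclideanCLM (𝕜 := ℝ) M⁻¹‖ = _
    rw [hnorm, hμeq]
  · rw [hμeq]
    have hApos : 0 < (n:ℝ)*(pin-pout)/2 := by
      apply div_pos _ (by norm_num)
      apply mul_pos hn0
      linarith
    have hTpos : 0 < lam + (n:ℝ)*(pin-pout)/2 := by linarith
    have hseq : Real.sqrt (1 - 4*(2*(k:ℝ)/(n:ℝ) + 2*(m:ℝ)/(n:ℝ))*lam*((n:ℝ)*(pin-pout)/2)
          /(lam + (n:ℝ)*(pin-pout)/2)^2)
        = s / (lam + (n:ℝ)*(pin-pout)/2) := by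
      have harg : 1 - 4*(2*(k:ℝ)/(n:ℝ) + 2*(m:ℝ)/(n:ℝ))*lam*((n:ℝ)*(pin-pout)/2)
            /(lam + (n:ℝ)*(pin-pout)/2)^2
          = (s / (lam + (n:ℝ)*(pin-pout)/2))^2 := by
        rw [div_pow, hs, Real.sq_sqrt hD0.le, ← hDe, sub_div,
          div_self (pow_ne_zero 2 hTpos.ne')]
        ring
      rw [harg, Real.sqrt_sq (div_nonneg (by rw [hs]; exact Real.sqrt_nonneg _) hTpos.le)]
    rw [hseq, hμdef, hA]
    have hT2 : lam + 2*β*(L+u) ≠ 0 := by nlinarith [mul_pos hβ (add_pos hL hu)]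
    field_simp [hT2]
    ring
  · rw [hμeq]; exact hμ0

end
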